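/- (Disintegration, Theorem 3.4) Let μ̂ be the unique V-quasi-invariant measure on the solenoid X_∞(r) with μ̂ ∘ θ₀⁻¹ = μ₀, where μ₀ has the fixed-point property and Δ is the associated function. For Δ, let P_{x₀} be the path measures of Proposition 2.3. Then for every bounded measurable f on X_∞(r), ∫_{X_∞(r)} f dμ̂ = ∫_X ∫_{Ω_{x₀}} f(x₀, ω) dP_{x₀}(ω) dμ₀(x₀). -/

import Mathlib

open MeasureTheory ENNReal

/-- The solenoid X_∞(r) = {(x₀,x₁,…) : r(x_{n+1}) = x_n}; θ_n ω = ω.1 n. -/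
abbrev Solenoid {X : Type*} (r : X → X) := {ω : ℕ → X // ∀ n, r (ω (n + 1)) = ω n}

/-- The shift (x₀,x₁,…) ↦ (x₁,x₂,…), the inverse of r̂; V-quasi-invariance
d(μ̂ ∘ r̂) = (V∘θ₀) dμ̂ reads: map shift μ̂ = μ̂.withDensity (V∘θ₀). -/
def solenoidShift {X : Type*} (r : X → X) : Solenoid r → Solenoid r :=
  fun ω => ⟨fun n => ω.1 (n + 1), fun n => ω.2 (n + 1)⟩

section Aux

variable {X : Type*}

lemma solenoid_coord (r : X → X) (ω : Solenoid r) (n k : ℕ) :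
    r^[k] (ω.1 (n + k)) = ω.1 n := by
  induction k with
  | zero => rfl
  | succ k ih =>
    rw [Function.iterate_succ_apply, show n + (k + 1) = (n + k) + 1 from rfl, ω.2 (n + k)]
    exact ih

lemma fib_fin (r : X → X) (hfin : ∀ x, (r ⁻¹' {x}).Finite) (n : ℕ) (x : X) :
    ((r^[n]) ⁻¹' {x}).Finite := by
  induction n generalizing x with
  | zero => simpa using Set.finite_singleton x
  | succ n ih =>
    have h : (r^[n+1]) ⁻¹' {x} = ⋃ z ∈ (r^[n]) ⁻¹' {x}, r ⁻¹' {z} := by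
      ext y
      simp only [Set.mem_preimage, Set.mem_singleton_iff, Set.mem_iUnion, exists_prop,
        Function.iterate_succ_apply]
      exact ⟨fun h => ⟨r y, h, rfl⟩, by rintro ⟨z, hz, rfl⟩; exact hz⟩
    rw [h]
    exact (ih x).biUnion fun z _ => hfin z

lemma finsum_mem_fin {s : Set X} (hs : s.Finite) (f : X → ℝ) :
    ∑ᶠ y ∈ s, f y = ∑ y ∈ hs.toFinset, f y := by
  rw [← finsum_mem_coe_finset, Set.Finite.coe_toFinset]

lemma rearr (r : X → X) (hfin : ∀ x, (r ⁻¹' {x}).Finite) (Δ g : X → ℝ) (n : ℕ) (x : X) :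
    ∑ᶠ y ∈ (r^[n+1]) ⁻¹' {x}, (∏ j ∈ Finset.range (n+1), Δ (r^[j] y)) * g y
      = ∑ᶠ z ∈ (r^[n]) ⁻¹' {x}, (∏ j ∈ Finset.range n, Δ (r^[j] z)) *
          ∑ᶠ y ∈ r ⁻¹' {z}, Δ y * g y := by
  classical
  have hT := fib_fin r hfin n x
  have hS := fib_fin r hfin (n+1) x
  rw [finsum_mem_fin hS, finsum_mem_fin hT]
  have hbU : hS.toFinset = hT.toFinset.biUnion (fun z => (hfin z).toFinset) := by
    ext y
    simp only [Set.Finite.mem_toFinset, Set.mem_preimage, Set.mem_singleton_iff,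
      Finset.mem_biUnion, Function.iterate_succ_apply]
    exact ⟨fun h => ⟨r y, h, rfl⟩, by rintro ⟨z, hz, rfl⟩; exact hz⟩
  rw [hbU, Finset.sum_biUnion]
  · refine Finset.sum_congr rfl fun z hz => ?_
    rw [finsum_mem_fin (hfin z), Finset.mul_sum]
    refine Finset.sum_congr rfl fun y hy => ?_
    have hry : r y = z := by
      simpa using (hfin z).mem_toFinset.mp hy
    rw [Finset.prod_range_succ']
    have hprod : ∀ j ∈ Finset.range n, Δ (r^[j+1] y) = Δ (r^[j] z) := by
      intro j _
      rw [Function.iterate_succ_apply, hry]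
    rw [Finset.prod_congr rfl hprod]
    simp only [Function.iterate_zero_apply]
    ring
  · intro z₁ h₁ z₂ h₂ hne
    refine Finset.disjoint_left.mpr fun y hy₁ hy₂ => hne ?_
    have e₁ : r y = z₁ := by simpa using (hfin z₁).mem_toFinset.mp hy₁
    have e₂ : r y = z₂ := by simpa using (hfin z₂).mem_toFinset.mp hy₂
    rw [← e₁, e₂]

lemma map_withDensity_comp {α β : Type*} [MeasurableSpace α] [MeasurableSpace β]
    (μ : Measure α) (θ : α → β) (hθ : Measurable θ) (g : β → ℝ≥0∞) (hg : Measurable g) :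
    Measure.map θ (μ.withDensity (g ∘ θ)) = (Measure.map θ μ).withDensity g := by
  ext B hB
  rw [Measure.map_apply hθ hB, withDensity_apply _ (hθ hB), withDensity_apply _ hB,
    setLIntegral_map hB hg hθ]
  rfl

lemma integrable_of_bdd {α : Type*} [MeasurableSpace α] {μ : Measure α} [IsFiniteMeasure μ]
    {f : α → ℝ} (hf : Measurable f) {C : ℝ} (hC : ∀ x, |f x| ≤ C) : Integrable f μ :=
  ⟨hf.aestronglyMeasurable, HasFiniteIntegral.of_bounded (C := C)
    (Filter.Eventually.of_forall fun x => by simpa [Real.norm_eq_abs] using hC x)⟩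

end Aux

/-- Disintegration, Theorem 3.4: let μ₀ have the fixed-point property with
associated function Δ, let μ̂ be the V-quasi-invariant measure on X_∞(r) with
μ̂ ∘ θ₀⁻¹ = μ₀, and for each x₀ let P x₀ be the path measure of Proposition 2.3
(supported on {ω : θ₀ ω = x₀}, with marginals given by the Δ⁽ⁿ⁾-sums). Then
∫ f dμ̂ = ∫_X ∫_{Ω_{x₀}} f(x₀,ω) dP_{x₀}(ω) dμ₀(x₀) for all bounded measurable f. -/
theorem stmt17 {X : Type*} [MeasurableSpace X] (r : X → X) (hr : Measurable r)
    (hsurj : Function.Surjective r) (hfin : ∀ x, (r ⁻¹' {x}).Finite)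
    (V : X → ℝ) (hVm : Measurable V) (hVpos : ∀ x, 0 ≤ V x) (hVbdd : ∃ C, ∀ x, V x ≤ C)
    (μ₀ : Measure X) [IsFiniteMeasure μ₀]
    (hfp : ∀ f : X → ℝ, Measurable f → (∃ C, ∀ x, |f x| ≤ C) →
      ∫ x, V x * f (r x) ∂μ₀ = ∫ x, f x ∂μ₀)
    (Δ : X → ℝ) (hΔm : Measurable Δ) (hΔpos : ∀ x, 0 ≤ Δ x)
    (hΔ1 : ∀ᵐ x ∂μ₀, ∑ᶠ y ∈ r ⁻¹' {x}, Δ y = 1)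
    (hΔint : ∀ f : X → ℝ, Measurable f → (∃ C, ∀ x, |f x| ≤ C) →
      ∫ x, V x * f x ∂μ₀ = ∫ x, ∑ᶠ y ∈ r ⁻¹' {x}, Δ y * f y ∂μ₀)
    (μhat : Measure (Solenoid r)) [IsFiniteMeasure μhat]
    (hquasi : Measure.map (solenoidShift r) μhat
      = μhat.withDensity fun ω => ENNReal.ofReal (V (ω.1 0)))
    (hθ0 : Measure.map (fun ω : Solenoid r => ω.1 0) μhat = μ₀)
    (P : X → Measure (Solenoid r)) [∀ x, IsProbabilityMeasure (P x)]
    (hPsupp : ∀ x, P x {ω : Solenoid r | ω.1 0 ≠ x} = 0)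
    (hPmeas : ∀ f : Solenoid r → ℝ, Measurable f → (∃ C, ∀ ω, |f ω| ≤ C) →
      Measurable fun x => ∫ ω, f ω ∂(P x))
    (hP : ∀ x₀ : X, ∀ n : ℕ, 1 ≤ n → ∀ g : X → ℝ, Measurable g → (∃ C, ∀ x, |g x| ≤ C) →
      ∫ ω, g (ω.1 n) ∂(P x₀)
        = ∑ᶠ y ∈ (r^[n]) ⁻¹' {x₀}, (∏ j ∈ Finset.range n, Δ (r^[j] y)) * g y) :
    ∀ f : Solenoid r → ℝ, Measurable f → (∃ C, ∀ ω, |f ω| ≤ C) →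
      ∫ ω, f ω ∂μhat = ∫ x₀, (∫ ω, f ω ∂(P x₀)) ∂μ₀ := by
  classical
  obtain ⟨C₀, hC₀⟩ := hVbdd
  have hθ : ∀ n, Measurable fun ω : Solenoid r => ω.1 n :=
    fun n => (measurable_pi_apply n).comp measurable_subtype_coe
  have hrit : ∀ n : ℕ, Measurable (r^[n]) := fun n => hr.iterate n
  have hshiftm : Measurable (solenoidShift r) := by
    unfold solenoidShift
    exact Measurable.subtype_mk (measurable_pi_lambda (fun (ω : Solenoid r) n => ω.1 (n+1)) fun n =>
      (measurable_pi_apply (n+1)).comp measurable_subtype_coe)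
  -- P is a measurable family
  have hPm : Measurable P := by
    apply Measure.measurable_of_measurable_coe
    intro s hs
    have h1 : Measurable fun x => ∫ ω, s.indicator (fun _ => (1:ℝ)) ω ∂P x :=
      hPmeas _ (measurable_const.indicator hs)
        ⟨1, fun ω => by by_cases h : ω ∈ s <;> simp [Set.indicator_apply, h]⟩
    have h2 : (fun x => P x s)
        = fun x => ENNReal.ofReal (∫ ω, s.indicator (fun _ => (1:ℝ)) ω ∂P x) := by
      funext x
      rw [show s.indicator (fun _ => (1:ℝ)) = s.indicator 1 from rfl,
        integral_indicator_one hs, measureReal_def, ENNReal.ofReal_toReal (measure_ne_top _ _)]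
    rw [h2]
    exact ENNReal.measurable_ofReal.comp h1
  -- integration of g ∘ θ₀ against P x
  have hP0 : ∀ (g : X → ℝ) (x : X), ∫ ω, g (ω.1 0) ∂P x = g x := by
    intro g x
    have h0 : ∀ᵐ ω ∂P x, ω.1 0 = x := by
      rw [ae_iff]; exact hPsupp x
    calc ∫ ω, g (ω.1 0) ∂P x = ∫ ω, g x ∂P x :=
          integral_congr_ae (h0.mono fun ω hω => by simp only [hω])
      _ = g x := by simp
  -- bound on products of V
  have hVVb : ∀ (n : ℕ) (x : X),
      (∏ j ∈ Finset.range n, V (r^[j] x)) ≤ (1 + |C₀|)^n := by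
    intro n x
    calc (∏ j ∈ Finset.range n, V (r^[j] x)) ≤ ∏ _j ∈ Finset.range n, (1 + |C₀|) :=
          Finset.prod_le_prod (fun j _ => hVpos _)
            (fun j _ => (hC₀ _).trans ((le_abs_self _).trans (by linarith [abs_nonneg C₀])))
      _ = (1 + |C₀|)^n := by rw [Finset.prod_const, Finset.card_range]
  -- the key integral identity
  have KL : ∀ n : ℕ, ∀ g : X → ℝ, Measurable g → (∃ C, ∀ x, |g x| ≤ C) →
      ∫ x, (∏ j ∈ Finset.range n, V (r^[j] x)) * g x ∂μ₀
        = ∫ x, (∫ ω, g (ω.1 n) ∂P x) ∂μ₀ := by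
    intro n
    induction n with
    | zero =>
      intro g hg hgb
      simp only [Finset.range_zero, Finset.prod_empty, one_mul]
      have h : (fun x => ∫ ω, g (ω.1 0) ∂P x) = fun x => g x := funext fun x => hP0 g x
      rw [h]
    | succ n ih =>
      intro g hg hgb
      obtain ⟨Cg, hCg⟩ := hgb
      set G : X → ℝ := fun x => ∫ ω, g (ω.1 1) ∂P x with hGdef
      have hGm : Measurable G := hPmeas _ (hg.comp (hθ 1)) ⟨Cg, fun ω => hCg _⟩
      have hGb : ∀ x, |G x| ≤ |Cg| := by
        intro x
        have h := norm_integral_le_of_norm_le_const (μ := P x)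
          (f := fun ω => g (ω.1 1)) (C := |Cg|)
          (Filter.Eventually.of_forall fun ω => by
            simpa [Real.norm_eq_abs] using (hCg _).trans (le_abs_self Cg))
        simpa [Real.norm_eq_abs, measure_univ] using h
      have hf' : Measurable fun y => (∏ j ∈ Finset.range n, V (r^[j] (r y))) * g y :=
        (Finset.measurable_prod _ fun j _ => hVm.comp ((hrit j).comp hr)).mul hg
      have hf'b : ∃ C, ∀ y, |(∏ j ∈ Finset.range n, V (r^[j] (r y))) * g y| ≤ C := by
        refine ⟨(1 + |C₀|)^n * |Cg|, fun y => ?_⟩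
        rw [abs_mul]
        refine mul_le_mul ?_ ((hCg y).trans (le_abs_self Cg)) (abs_nonneg _) (by positivity)
        rw [abs_of_nonneg (Finset.prod_nonneg fun j _ => hVpos _)]
        exact hVVb n (r y)
      have step1 := hΔint _ hf' hf'b
      have lhs_eq : ∫ x, (∏ j ∈ Finset.range (n+1), V (r^[j] x)) * g x ∂μ₀
          = ∫ x, V x * ((∏ j ∈ Finset.range n, V (r^[j] (r x))) * g x) ∂μ₀ := by
        refine integral_congr_ae (Filter.Eventually.of_forall fun x => ?_)
        simp only []
        rw [Finset.prod_range_succ']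
        have h : ∀ j ∈ Finset.range n, V (r^[j+1] x) = V (r^[j] (r x)) := fun j _ => by
          rw [Function.iterate_succ_apply]
        rw [Finset.prod_congr rfl h]
        simp only [Function.iterate_zero_apply]
        ring
      have hP1 : ∀ x, (∑ᶠ y ∈ r ⁻¹' {x}, Δ y * g y) = G x := by
        intro x
        rw [show G x = ∫ ω, g (ω.1 1) ∂P x from rfl,
          hP x 1 le_rfl g hg ⟨Cg, hCg⟩]
        refine (finsum_mem_congr ?_ fun y _ => ?_).symm
        · simp
        · simp
      have PT : ∀ x, (∑ᶠ y ∈ r ⁻¹' {x}, Δ y * ((∏ j ∈ Finset.range n, V (r^[j] (r y))) * g y))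
          = (∏ j ∈ Finset.range n, V (r^[j] x)) * ∑ᶠ y ∈ r ⁻¹' {x}, Δ y * g y := by
        intro x
        rw [finsum_mem_fin (hfin x), finsum_mem_fin (hfin x), Finset.mul_sum]
        refine Finset.sum_congr rfl fun y hy => ?_
        have hry : r y = x := by simpa using (hfin x).mem_toFinset.mp hy
        rw [hry]; ring
      have key1 : ∫ x, (∏ j ∈ Finset.range (n+1), V (r^[j] x)) * g x ∂μ₀
          = ∫ x, (∏ j ∈ Finset.range n, V (r^[j] x)) * G x ∂μ₀ := by
        rw [lhs_eq, step1]
        refine integral_congr_ae (Filter.Eventually.of_forall fun x => ?_)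
        simp only []
        rw [PT x, hP1 x]
      rw [key1, ih G hGm ⟨|Cg|, hGb⟩]
      refine integral_congr_ae (Filter.Eventually.of_forall fun x => ?_)
      simp only []
      cases n with
      | zero =>
        exact hP0 G x
      | succ m =>
        rw [hP x (m+1) (by omega) G hGm ⟨|Cg|, hGb⟩,
          hP x (m+1+1) (by omega) g hg ⟨Cg, hCg⟩,
          rearr r hfin Δ g (m+1) x]
        refine finsum_mem_congr rfl fun z hz => ?_
        congr 1
        exact (hP1 z).symm
  -- marginals of μhat
  have hmap : ∀ n : ℕ, Measure.map (fun ω : Solenoid r => ω.1 n) μhat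
      = μ₀.withDensity (fun x => ∏ j ∈ Finset.range n, ENNReal.ofReal (V (r^[j] x))) := by
    intro n
    induction n with
    | zero =>
      simp only [Finset.range_zero, Finset.prod_empty]
      rw [show (fun _ : X => (1 : ℝ≥0∞)) = 1 from rfl, withDensity_one]
      exact hθ0
    | succ n ih =>
      have hcomp : (fun ω : Solenoid r => ω.1 (n+1))
          = (fun ω : Solenoid r => ω.1 n) ∘ solenoidShift r := rfl
      rw [hcomp, ← Measure.map_map (hθ n) hshiftm, hquasi]
      have heq : (fun ω : Solenoid r => ENNReal.ofReal (V (ω.1 0)))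
          = (fun x => ENNReal.ofReal (V (r^[n] x))) ∘ (fun ω : Solenoid r => ω.1 n) := by
        funext ω
        have h := solenoid_coord r ω 0 n
        rw [Nat.zero_add] at h
        simp only [Function.comp_apply, h]
      rw [heq, map_withDensity_comp _ _ (hθ n) (fun x => ENNReal.ofReal (V (r^[n] x)))
        (ENNReal.measurable_ofReal.comp (hVm.comp (hrit n))), ih, ← withDensity_mul]
      · congr 1
        funext x
        rw [Pi.mul_apply, Finset.prod_range_succ]
      · exact Finset.measurable_prod _ fun j _ =>
          ENNReal.measurable_ofReal.comp (hVm.comp (hrit j))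
      · exact ENNReal.measurable_ofReal.comp (hVm.comp (hrit n))
  -- the generating π-system
  set C : Set (Set (Solenoid r)) :=
    {s | ∃ (n : ℕ) (B : Set X), MeasurableSet B
      ∧ s = (fun ω : Solenoid r => ω.1 (n+1)) ⁻¹' B} with hCdef
  have hsetshift : ∀ (a k : ℕ) (B : Set X),
      ((fun ω : Solenoid r => ω.1 a) ⁻¹' B)
        = (fun ω : Solenoid r => ω.1 (a+k)) ⁻¹' ((r^[k]) ⁻¹' B) := by
    intro a k B
    ext ω
    simp [Set.mem_preimage, solenoid_coord r ω a k]
  have hgen : (inferInstance : MeasurableSpace (Solenoid r))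
      = MeasurableSpace.generateFrom C := by
    apply le_antisymm
    · have h1 : (inferInstance : MeasurableSpace (Solenoid r))
          = MeasurableSpace.comap Subtype.val
            (⨆ n : ℕ, MeasurableSpace.comap (fun x : ℕ → X => x n) inferInstance) := rfl
      rw [h1, MeasurableSpace.comap_iSup]
      refine iSup_le fun n => ?_
      rw [MeasurableSpace.comap_comp]
      intro s hs
      obtain ⟨B, hB, hBs⟩ := hs
      subst hBs
      refine MeasurableSpace.measurableSet_generateFrom ?_
      exact ⟨n, (r^[1]) ⁻¹' B, (hrit 1) hB, hsetshift n 1 B⟩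
    · refine MeasurableSpace.generateFrom_le ?_
      rintro s ⟨n, B, hB, rfl⟩
      exact (hθ (n+1)) hB
  have hpiC : IsPiSystem C := by
    rintro s ⟨n, B, hB, rfl⟩ t ⟨m, B', hB', rfl⟩ _
    rcases le_total n m with h | h
    · have hss := hsetshift (n+1) (m-n) B
      rw [show n+1+(m-n) = m+1 by omega] at hss
      exact ⟨m, (r^[m-n]) ⁻¹' B ∩ B', ((hrit (m-n)) hB).inter hB',
        by rw [Set.preimage_inter, ← hss]⟩
    · have hss := hsetshift (m+1) (n-m) B'
      rw [show m+1+(n-m) = n+1 by omega] at hss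
      exact ⟨n, B ∩ (r^[n-m]) ⁻¹' B', hB.inter ((hrit (n-m)) hB'),
        by rw [Set.preimage_inter, ← hss]⟩
  -- equality on the π-system
  have hEQ : ∀ s ∈ C, μhat s = (μ₀.bind P) s := by
    rintro s ⟨n, B, hB, rfl⟩
    set g : X → ℝ := B.indicator 1 with hgdef
    have hgm : Measurable g := measurable_one.indicator hB
    have hgb : ∀ x, |g x| ≤ 1 := by
      intro x
      rw [hgdef]
      by_cases hx : x ∈ B <;> simp [Set.indicator_apply, hx]
    have hVVm : Measurable fun x => ∏ j ∈ Finset.range (n+1), V (r^[j] x) :=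
      Finset.measurable_prod _ fun j _ => hVm.comp (hrit j)
    have hVVnn : ∀ x, 0 ≤ ∏ j ∈ Finset.range (n+1), V (r^[j] x) :=
      fun x => Finset.prod_nonneg fun j _ => hVpos _
    have hgnn : ∀ x, 0 ≤ g x := by
      intro x
      rw [hgdef]
      by_cases hx : x ∈ B <;> simp [Set.indicator_apply, hx]
    have hint : Integrable (fun x => (∏ j ∈ Finset.range (n+1), V (r^[j] x)) * g x) μ₀ := by
      refine integrable_of_bdd (hVVm.mul hgm) (C := (1 + |C₀|)^(n+1)) fun x => ?_
      rw [abs_mul]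
      calc |∏ j ∈ Finset.range (n+1), V (r^[j] x)| * |g x|
          ≤ (1 + |C₀|)^(n+1) * 1 := by
            refine mul_le_mul ?_ (hgb x) (abs_nonneg _) (by positivity)
            rw [abs_of_nonneg (hVVnn x)]
            exact hVVb (n+1) x
        _ = (1 + |C₀|)^(n+1) := mul_one _
    -- LHS
    have hμhat : μhat ((fun ω : Solenoid r => ω.1 (n+1)) ⁻¹' B)
        = ENNReal.ofReal (∫ x, (∏ j ∈ Finset.range (n+1), V (r^[j] x)) * g x ∂μ₀) := by
      rw [← Measure.map_apply (hθ (n+1)) hB, hmap (n+1), withDensity_apply _ hB,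
        ofReal_integral_eq_lintegral_ofReal hint
          (Filter.Eventually.of_forall fun x => mul_nonneg (hVVnn x) (hgnn x)),
        ← lintegral_indicator hB]
      refine lintegral_congr fun x => ?_
      by_cases hx : x ∈ B
      · rw [Set.indicator_of_mem hx, hgdef, Set.indicator_of_mem hx, Pi.one_apply, mul_one,
          ENNReal.ofReal_prod_of_nonneg fun j _ => hVpos _]
      · rw [Set.indicator_of_notMem hx, hgdef, Set.indicator_of_notMem hx, mul_zero,
          ENNReal.ofReal_zero]
    -- RHS
    have hptr : ∀ x, ∫ ω, g (ω.1 (n+1)) ∂P x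
        = ((P x) ((fun ω : Solenoid r => ω.1 (n+1)) ⁻¹' B)).toReal := by
      intro x
      rw [← measureReal_def, ← integral_indicator_one ((hθ (n+1)) hB)]
      refine integral_congr_ae (Filter.Eventually.of_forall fun ω => ?_)
      simp only [hgdef]
      by_cases hω : ω.1 (n+1) ∈ B <;>
        simp [Set.indicator_apply, Set.mem_preimage, hω]
    have hintg : Integrable (fun x => ∫ ω, g (ω.1 (n+1)) ∂P x) μ₀ := by
      refine integrable_of_bdd (hPmeas _ (hgm.comp (hθ (n+1))) ⟨1, fun ω => hgb _⟩)
        (C := 1) fun x => ?_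
      have h := norm_integral_le_of_norm_le_const (μ := P x)
        (f := fun ω => g (ω.1 (n+1))) (C := 1)
        (Filter.Eventually.of_forall fun ω => by simpa [Real.norm_eq_abs] using hgb _)
      simpa [Real.norm_eq_abs, measure_univ] using h
    have hbind : (μ₀.bind P) ((fun ω : Solenoid r => ω.1 (n+1)) ⁻¹' B)
        = ENNReal.ofReal (∫ x, (∫ ω, g (ω.1 (n+1)) ∂P x) ∂μ₀) := by
      rw [Measure.bind_apply ((hθ (n+1)) hB) hPm.aemeasurable,
        ofReal_integral_eq_lintegral_ofReal hintg
          (Filter.Eventually.of_forall fun x => integral_nonneg fun ω => hgnn _)]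
      refine lintegral_congr fun x => ?_
      rw [hptr x, ENNReal.ofReal_toReal (measure_ne_top _ _)]
    rw [hμhat, hbind, KL (n+1) g hgm ⟨1, hgb⟩]
  -- total mass and extensionality
  have huniv : μhat Set.univ = (μ₀.bind P) Set.univ := by
    have h1 : μhat Set.univ = μ₀ Set.univ := by
      rw [← hθ0, Measure.map_apply (hθ 0) MeasurableSet.univ, Set.preimage_univ]
    rw [h1, Measure.bind_apply MeasurableSet.univ hPm.aemeasurable]
    simp [measure_univ]
  have hμeq : μhat = μ₀.bind P := ext_of_generate_finite C hgen hpiC hEQ huniv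
  -- conclusion
  intro f hfm hfb
  obtain ⟨Cf, hCf⟩ := hfb
  have hCf' : ∀ ω, |f ω| ≤ |Cf| := fun ω => (hCf ω).trans (le_abs_self Cf)
  haveI hfinbind : IsFiniteMeasure (μ₀.bind P) := hμeq ▸ ‹IsFiniteMeasure μhat›
  have hfint : ∀ x, Integrable f (P x) := fun x => integrable_of_bdd hfm hCf'
  have hintb : Integrable f (μ₀.bind P) := integrable_of_bdd hfm hCf'
  rw [hμeq, integral_eq_lintegral_pos_part_sub_lintegral_neg_part hintb,
    Measure.lintegral_bind (f := fun ω => ENNReal.ofReal (f ω)) hPm.aemeasurable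
      (ENNReal.measurable_ofReal.comp hfm).aemeasurable,
    Measure.lintegral_bind (f := fun ω => ENNReal.ofReal (-f ω)) hPm.aemeasurable
      (ENNReal.measurable_ofReal.comp hfm.neg).aemeasurable]
  have hIpm : Measurable fun x => ∫⁻ ω, ENNReal.ofReal (f ω) ∂P x :=
    (Measure.measurable_lintegral (ENNReal.measurable_ofReal.comp hfm)).comp hPm
  have hImm : Measurable fun x => ∫⁻ ω, ENNReal.ofReal (-f ω) ∂P x :=
    (Measure.measurable_lintegral (ENNReal.measurable_ofReal.comp hfm.neg)).comp hPm
  have hIpb : ∀ x, (∫⁻ ω, ENNReal.ofReal (f ω) ∂P x) ≤ ENNReal.ofReal |Cf| := by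
    intro x
    calc ∫⁻ ω, ENNReal.ofReal (f ω) ∂P x ≤ ∫⁻ _ω, ENNReal.ofReal |Cf| ∂P x :=
          lintegral_mono fun ω =>
            ENNReal.ofReal_le_ofReal ((le_abs_self _).trans (hCf' ω))
      _ = ENNReal.ofReal |Cf| := by simp [measure_univ]
  have hImb : ∀ x, (∫⁻ ω, ENNReal.ofReal (-f ω) ∂P x) ≤ ENNReal.ofReal |Cf| := by
    intro x
    calc ∫⁻ ω, ENNReal.ofReal (-f ω) ∂P x ≤ ∫⁻ _ω, ENNReal.ofReal |Cf| ∂P x :=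
          lintegral_mono fun ω =>
            ENNReal.ofReal_le_ofReal ((le_abs_self _).trans ((abs_neg (f ω)) ▸ hCf' ω))
      _ = ENNReal.ofReal |Cf| := by simp [measure_univ]
  have hRHS : ∫ x, (∫ ω, f ω ∂P x) ∂μ₀
      = ∫ x, ((∫⁻ ω, ENNReal.ofReal (f ω) ∂P x).toReal
          - (∫⁻ ω, ENNReal.ofReal (-f ω) ∂P x).toReal) ∂μ₀ :=
    integral_congr_ae (Filter.Eventually.of_forall fun x =>
      integral_eq_lintegral_pos_part_sub_lintegral_neg_part (hfint x))
  have hintp : Integrable (fun x => (∫⁻ ω, ENNReal.ofReal (f ω) ∂P x).toReal) μ₀ := by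
    refine integrable_of_bdd (ENNReal.measurable_toReal.comp hIpm) (C := |Cf|) fun x => ?_
    rw [abs_of_nonneg ENNReal.toReal_nonneg]
    calc (∫⁻ ω, ENNReal.ofReal (f ω) ∂P x).toReal
        ≤ (ENNReal.ofReal |Cf|).toReal :=
          ENNReal.toReal_mono ENNReal.ofReal_ne_top (hIpb x)
      _ = |Cf| := ENNReal.toReal_ofReal (abs_nonneg Cf)
  have hintm : Integrable (fun x => (∫⁻ ω, ENNReal.ofReal (-f ω) ∂P x).toReal) μ₀ := by
    refine integrable_of_bdd (ENNReal.measurable_toReal.comp hImm) (C := |Cf|) fun x => ?_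
    rw [abs_of_nonneg ENNReal.toReal_nonneg]
    calc (∫⁻ ω, ENNReal.ofReal (-f ω) ∂P x).toReal
        ≤ (ENNReal.ofReal |Cf|).toReal :=
          ENNReal.toReal_mono ENNReal.ofReal_ne_top (hImb x)
      _ = |Cf| := ENNReal.toReal_ofReal (abs_nonneg Cf)
  rw [hRHS, integral_sub hintp hintm,
    integral_toReal hIpm.aemeasurable
      (Filter.Eventually.of_forall fun x => lt_of_le_of_lt (hIpb x) ENNReal.ofReal_lt_top),
    integral_toReal hImm.aemeasurable
      (Filter.Eventually.of_forall fun x => lt_of_le_of_lt (hImb x) ENNReal.ofReal_lt_top)]
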